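/- Let s and l be positive integers with l ≥ 2, let p be a prime, and let t₀ ≥ 1 be the integer with p^{t₀-1} ≤ l < p^{t₀}. For t ≥ 1 set f_l(t) = min{ -v_p(H({s}^l;n)) : p^{t-1} ≤ n < p^t }. If there exists an integer τ > t₀ such that f_l(τ) > (l-1)sτ - s, then the set J({s}^l|p) = {n ≥ 0 : p divides the numerator of H({s}^l;n)} is finite. -/

import Mathlib

open Classical in
/-- Multiple harmonic sum `H(s₁,…,s_l; n) = ∑_{1 ≤ k₁ < ⋯ < k_l ≤ n} k₁^{-s₁} ⋯ k_l^{-s_l}`,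
encoded via strictly increasing tuples of indices in `{1,…,n}` (an empty sum is `0`,
and `mhs [] n = 1`). -/
noncomputable def mhs (s : List ℕ) (n : ℕ) : ℚ :=
  ∑ k ∈ Finset.univ.filter
      (fun k : Fin s.length → Fin (n + 1) =>
        StrictMono k ∧ ∀ i, 1 ≤ (k i : ℕ)),
    ∏ i, 1 / (((k i : ℕ) : ℚ) ^ s.get i)

open Classical in
/-- `p`-restricted multiple harmonic sum `H*(s; n)`: same sum with all indices
not divisible by `p`. -/
noncomputable def mhsStar (p : ℕ) (s : List ℕ) (n : ℕ) : ℚ :=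
  ∑ k ∈ Finset.univ.filter
      (fun k : Fin s.length → Fin (n + 1) =>
        StrictMono k ∧ ∀ i, 1 ≤ (k i : ℕ) ∧ ¬ p ∣ (k i : ℕ)),
    ∏ i, 1 / (((k i : ℕ) : ℚ) ^ s.get i)


noncomputable def Hsub (s l n : ℕ) : ℚ :=
  ∑ A ∈ (Finset.Icc 1 n).powersetCard l, ∏ k ∈ A, (1 / (k : ℚ) ^ s)

open Classical in
noncomputable def Hstar (p s l n : ℕ) : ℚ :=
  ∑ A ∈ ((Finset.Icc 1 n).filter (fun k => ¬ p ∣ k)).powersetCard l,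
    ∏ k ∈ A, (1 / (k : ℚ) ^ s)

section val
variable {p : ℕ} [hp : Fact p.Prime]

lemma val_prod (S : Finset ℕ) (f : ℕ → ℚ) (hf : ∀ k ∈ S, f k ≠ 0) :
    padicValRat p (∏ k ∈ S, f k) = ∑ k ∈ S, padicValRat p (f k) := by
  induction S using Finset.cons_induction with
  | empty => simp
  | cons a S ha ih =>
    rw [Finset.prod_cons, Finset.sum_cons,
      padicValRat.mul (hf a (Finset.mem_cons_self a S))
        (Finset.prod_ne_zero_iff.2 fun k hk => hf k (Finset.mem_cons_of_mem hk)),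
      ih (fun k hk => hf k (Finset.mem_cons_of_mem hk))]

lemma val_sum_ge {ι : Type*} (S : Finset ι) (f : ι → ℚ) (c : ℤ)
    (h : ∀ a ∈ S, f a ≠ 0 → c ≤ padicValRat p (f a)) :
    (∑ a ∈ S, f a) = 0 ∨ c ≤ padicValRat p (∑ a ∈ S, f a) := by
  induction S using Finset.cons_induction with
  | empty => simp
  | cons a S ha ih =>
    rw [Finset.sum_cons]
    rcases ih (fun a ha' h' => h a (Finset.mem_cons_of_mem ha') h') with h0 | hge
    · rw [h0, add_zero]
      by_cases hfa : f a = 0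
      · exact Or.inl hfa
      · exact Or.inr (h a (Finset.mem_cons_self a S) hfa)
    · by_cases hfa : f a = 0
      · rw [hfa, zero_add]
        right
        exact hge
      · by_cases hsum : f a + ∑ a ∈ S, f a = 0
        · exact Or.inl hsum
        · right
          refine le_trans (le_min (h a (Finset.mem_cons_self a S) hfa) hge)
            (padicValRat.min_le_padicValRat_add hsum)

lemma val_add_dominant {a b : ℚ} (ha : a ≠ 0)
    (hb : b ≠ 0 → padicValRat p a < padicValRat p b) :
    a + b ≠ 0 ∧ padicValRat p (a + b) = padicValRat p a := by
  by_cases hbne : b = 0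
  · subst hbne; simpa using ha
  · have hlt := hb hbne
    have hab : a + b ≠ 0 := by
      intro h
      have hab' : a = -b := eq_neg_of_add_eq_zero_left h
      rw [hab', padicValRat.neg] at hlt
      exact lt_irrefl _ hlt
    exact ⟨hab, padicValRat.add_eq_of_lt hab ha hbne hlt⟩

lemma one_le_val_of_dvd_num {q : ℚ} (hq : q ≠ 0) (h : (p : ℤ) ∣ q.num) :
    1 ≤ padicValRat p q := by
  have hnum : q.num ≠ 0 := Rat.num_ne_zero.2 hq
  have hdvd : p ∣ q.num.natAbs := Int.natCast_dvd.1 h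
  have hden : ¬ p ∣ q.den := by
    intro hd
    have h1 : p = 1 := Nat.eq_one_of_dvd_coprimes q.reduced hdvd hd
    exact hp.out.one_lt.ne' h1
  rw [padicValRat_def, padicValNat.eq_zero_of_not_dvd hden]
  have : 1 ≤ padicValInt p q.num := by
    unfold padicValInt
    exact one_le_padicValNat_of_dvd (Int.natAbs_ne_zero.2 hnum) hdvd
  omega

lemma term_ne_zero (s : ℕ) {A : Finset ℕ} (hA : ∀ k ∈ A, 1 ≤ k) :
    ∏ k ∈ A, (1 / (k : ℚ) ^ s) ≠ 0 := by
  refine Finset.prod_ne_zero_iff.2 fun k hk => ?_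
  have : (k : ℚ) ≠ 0 := Nat.cast_ne_zero.2 (by have := hA k hk; omega)
  positivity

lemma val_one_div_pow {s k t : ℕ} (hk : 1 ≤ k) (hkt : k < p ^ t) :
    -(((s : ℤ)) * t) ≤ padicValRat p (1 / (k : ℚ) ^ s) := by
  have hk0 : (k : ℚ) ≠ 0 := Nat.cast_ne_zero.2 (by omega)
  rw [one_div, padicValRat.inv, padicValRat.pow (q := (k : ℚ))]
  have hval : padicValRat p (k : ℚ) = padicValNat p k := by
    rw [← padicValRat.of_nat]
  rw [hval]
  have hv : padicValNat p k ≤ t := by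
    by_contra hcon
    push_neg at hcon
    have hdvd : p ^ padicValNat p k ∣ k := pow_padicValNat_dvd
    have := Nat.le_of_dvd (by omega) hdvd
    have := Nat.pow_le_pow_right hp.out.one_lt.le hcon.le
    have := Nat.pow_lt_pow_right hp.out.one_lt (Nat.lt_of_lt_of_le (Nat.lt_succ_self t) hcon)
    omega
  have hs0 : (0 : ℤ) ≤ s := Int.natCast_nonneg s
  have : (padicValNat p k : ℤ) ≤ t := Int.ofNat_le.2 hv
  nlinarith

lemma val_term_ge (s t : ℕ) {A : Finset ℕ} (hA : ∀ k ∈ A, 1 ≤ k ∧ k < p ^ t) :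
    -((A.card : ℤ) * s * t) ≤ padicValRat p (∏ k ∈ A, (1 / (k : ℚ) ^ s)) := by
  rw [val_prod A _ (fun k hk => by
    have hk1 := (hA k hk).1
    have hk0 : (k : ℚ) ≠ 0 := Nat.cast_ne_zero.2 (by omega)
    positivity)]
  calc -((A.card : ℤ) * s * t) = ∑ _k ∈ A, -((s : ℤ) * t) := by
        rw [Finset.sum_const, nsmul_eq_mul]; ring
  _ ≤ _ := Finset.sum_le_sum fun k hk => val_one_div_pow (hA k hk).1 (hA k hk).2

lemma val_Hsub_ge (s j m t : ℕ) (hm : m < p ^ t) :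
    Hsub s j m = 0 ∨ -((j : ℤ) * s * t) ≤ padicValRat p (Hsub s j m) := by
  refine val_sum_ge _ _ _ fun A hA _ => ?_
  rw [Finset.mem_powersetCard] at hA
  have hmem : ∀ k ∈ A, 1 ≤ k ∧ k < p ^ t := by
    intro k hk
    have := Finset.mem_Icc.1 (hA.1 hk)
    omega
  have := val_term_ge s t hmem
  rwa [hA.2] at this

lemma val_Hstar_nonneg (s j n : ℕ) :
    Hstar p s j n = 0 ∨ 0 ≤ padicValRat p (Hstar p s j n) := by
  refine val_sum_ge _ _ _ fun A hA _ => ?_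
  rw [Finset.mem_powersetCard] at hA
  have hmem : ∀ k ∈ A, 1 ≤ k ∧ ¬ p ∣ k := by
    intro k hk
    have := Finset.mem_filter.1 (hA.1 hk)
    exact ⟨(Finset.mem_Icc.1 this.1).1, this.2⟩
  rw [val_prod A _ (fun k hk => by
    have hk0 : (k : ℚ) ≠ 0 := Nat.cast_ne_zero.2 (by have := (hmem k hk).1; omega)
    positivity)]
  refine Finset.sum_nonneg fun k hk => ?_
  have hk1 := (hmem k hk).1
  have hk2 := (hmem k hk).2
  have hk0 : (k : ℚ) ≠ 0 := Nat.cast_ne_zero.2 (by omega)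
  rw [one_div, padicValRat.inv, padicValRat.pow (q := (k : ℚ)), padicValRat.of_nat,
    padicValNat.eq_zero_of_not_dvd hk2]
  simp

end val

open Finset in
lemma mhs_replicate_eq (s l n : ℕ) : mhs (List.replicate l s) n = Hsub s l n := by
  classical
  have hL : (List.replicate l s).length = l := List.length_replicate
  rw [mhs, Hsub]
  refine Finset.sum_nbij' (i := fun k => Finset.image (fun i => ((k i : ℕ))) Finset.univ)
      (j := fun A => if h : #A = (List.replicate l s).length
        then fun i => ⟨A.orderEmbOfFin h i % (n + 1), Nat.mod_lt _ (Nat.succ_pos n)⟩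
        else fun _ => 0) ?_ ?_ ?_ ?_ ?_
  · intro k hk
    rw [Finset.mem_filter] at hk
    obtain ⟨-, hmono, hge⟩ := hk
    have hinj : Function.Injective (fun i => ((k i : ℕ))) := by
      intro a b hab
      exact hmono.injective (Fin.ext hab)
    rw [Finset.mem_powersetCard]
    constructor
    · intro x hx
      rw [Finset.mem_image] at hx
      obtain ⟨i, -, rfl⟩ := hx
      exact Finset.mem_Icc.2 ⟨hge i, Nat.lt_succ_iff.1 (k i).isLt⟩
    · rw [Finset.card_image_of_injective _ hinj, Finset.card_univ, Fintype.card_fin, hL]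
  · intro A hA
    rw [Finset.mem_powersetCard] at hA
    obtain ⟨hsub, hcard⟩ := hA
    have h : #A = (List.replicate l s).length := by rw [hcard, hL]
    have hle : ∀ i, A.orderEmbOfFin h i ≤ n := fun i =>
      (Finset.mem_Icc.1 (hsub (A.orderEmbOfFin_mem h i))).2
    have hge1 : ∀ i, 1 ≤ A.orderEmbOfFin h i := fun i =>
      (Finset.mem_Icc.1 (hsub (A.orderEmbOfFin_mem h i))).1
    have hmod : ∀ i, A.orderEmbOfFin h i % (n + 1) = A.orderEmbOfFin h i := fun i =>
      Nat.mod_eq_of_lt (Nat.lt_succ_of_le (hle i))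
    simp only [dif_pos h, Finset.mem_filter]
    refine ⟨Finset.mem_univ _, ?_, ?_⟩
    · intro a b hab
      simp only [Fin.mk_lt_mk, hmod]
      exact (A.orderEmbOfFin h).strictMono hab
    · intro i
      simp only [hmod]
      exact hge1 i
  · intro k hk
    rw [Finset.mem_filter] at hk
    obtain ⟨-, hmono, hge⟩ := hk
    have hinj : Function.Injective (fun i => ((k i : ℕ))) := fun a b hab =>
      hmono.injective (Fin.ext hab)
    have h : #(Finset.image (fun i => ((k i : ℕ))) Finset.univ)
        = (List.replicate l s).length := by
      rw [Finset.card_image_of_injective _ hinj, Finset.card_univ, Fintype.card_fin]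
    simp only [dif_pos h]
    have hmono' : StrictMono (fun i => ((k i : ℕ))) := by
      intro a b hab
      exact hmono hab
    have huniq := Finset.orderEmbOfFin_unique h
      (f := fun i => ((k i : ℕ))) (fun x => Finset.mem_image_of_mem _ (Finset.mem_univ x))
      hmono'
    funext i
    have : (Finset.image (fun i => ((k i : ℕ))) Finset.univ).orderEmbOfFin h i = (k i : ℕ) := by
      rw [← huniq]
    ext
    simp only [this, Nat.mod_eq_of_lt (k i).isLt]
  · intro A hA
    rw [Finset.mem_powersetCard] at hA
    obtain ⟨hsub, hcard⟩ := hA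
    have h : #A = (List.replicate l s).length := by rw [hcard, hL]
    have hle : ∀ i, A.orderEmbOfFin h i ≤ n := fun i =>
      (Finset.mem_Icc.1 (hsub (A.orderEmbOfFin_mem h i))).2
    have hmod : ∀ i, A.orderEmbOfFin h i % (n + 1) = A.orderEmbOfFin h i := fun i =>
      Nat.mod_eq_of_lt (Nat.lt_succ_of_le (hle i))
    simp only [dif_pos h]
    ext x
    simp only [Finset.mem_image, Finset.mem_univ, true_and]
    constructor
    · rintro ⟨i, rfl⟩
      simp only [hmod]
      exact A.orderEmbOfFin_mem h i
    · intro hx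
      have : x ∈ Set.range (A.orderEmbOfFin h) := by
        rw [Finset.range_orderEmbOfFin]
        exact hx
      obtain ⟨i, hi⟩ := this
      refine ⟨i, ?_⟩
      rw [hmod, hi]
  · intro k hk
    rw [Finset.mem_filter] at hk
    obtain ⟨-, hmono, hge⟩ := hk
    have hinj : Function.Injective (fun i => ((k i : ℕ))) := fun a b hab =>
      hmono.injective (Fin.ext hab)
    rw [Finset.prod_image (fun a _ b _ hab => hinj hab)]
    refine Finset.prod_congr rfl fun i _ => ?_
    rw [List.get_eq_getElem, List.getElem_replicate]

open Finset in
lemma sum_powersetCard_filter_eq (F : Finset ℕ) (q : ℕ → Prop) [DecidablePred q]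
    (l j : ℕ) (hj : j ≤ l) (f : ℕ → ℚ) :
    ∑ A ∈ (F.powersetCard l).filter (fun A => #(A.filter q) = j), ∏ k ∈ A, f k
      = (∑ B ∈ (F.filter q).powersetCard j, ∏ k ∈ B, f k) *
        (∑ D ∈ (F.filter (fun x => ¬ q x)).powersetCard (l - j), ∏ k ∈ D, f k) := by
  classical
  rw [Finset.sum_mul_sum, ← Finset.sum_product']
  refine Finset.sum_nbij' (i := fun A => (A.filter q, A.filter (fun x => ¬ q x)))
    (j := fun BD => BD.1 ∪ BD.2) ?_ ?_ ?_ ?_ ?_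
  · intro A hA
    rw [Finset.mem_filter, Finset.mem_powersetCard] at hA
    obtain ⟨⟨hAF, hAcard⟩, hfib⟩ := hA
    have hsplit := Finset.card_filter_add_card_filter_not (s := A) q
    rw [Finset.mem_product, Finset.mem_powersetCard, Finset.mem_powersetCard]
    refine ⟨⟨Finset.filter_subset_filter q hAF, hfib⟩,
      ⟨Finset.filter_subset_filter _ hAF, ?_⟩⟩
    show #(A.filter (fun x => ¬ q x)) = l - j
    omega
  · intro BD hBD
    rw [Finset.mem_product, Finset.mem_powersetCard, Finset.mem_powersetCard] at hBD
    obtain ⟨⟨hB, hBcard⟩, hD, hDcard⟩ := hBD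
    have hdisj : Disjoint BD.1 BD.2 :=
      Finset.disjoint_filter_filter_not F F q |>.mono hB hD
    have hBq : ∀ x ∈ BD.1, q x := fun x hx => (Finset.mem_filter.1 (hB hx)).2
    have hDq : ∀ x ∈ BD.2, ¬ q x := fun x hx => (Finset.mem_filter.1 (hD hx)).2
    rw [Finset.mem_filter, Finset.mem_powersetCard]
    refine ⟨⟨Finset.union_subset (hB.trans (Finset.filter_subset _ _))
      (hD.trans (Finset.filter_subset _ _)), ?_⟩, ?_⟩
    · rw [Finset.card_union_of_disjoint hdisj]; omega
    · rw [Finset.filter_union, Finset.filter_eq_self.2 hBq,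
        Finset.filter_eq_empty_iff.2 hDq, Finset.union_empty, hBcard]
  · intro A hA
    exact Finset.filter_union_filter_not_eq q A
  · intro BD hBD
    rw [Finset.mem_product, Finset.mem_powersetCard, Finset.mem_powersetCard] at hBD
    obtain ⟨⟨hB, hBcard⟩, hD, hDcard⟩ := hBD
    have hBq : ∀ x ∈ BD.1, q x := fun x hx => (Finset.mem_filter.1 (hB hx)).2
    have hDq : ∀ x ∈ BD.2, ¬ q x := fun x hx => (Finset.mem_filter.1 (hD hx)).2
    have h1 : (BD.1 ∪ BD.2).filter q = BD.1 := by
      rw [Finset.filter_union, Finset.filter_eq_self.2 hBq,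
        Finset.filter_eq_empty_iff.2 hDq, Finset.union_empty]
    have h2 : (BD.1 ∪ BD.2).filter (fun x => ¬ q x) = BD.2 := by
      rw [Finset.filter_union, Finset.filter_eq_self.2 hDq,
        Finset.filter_eq_empty_iff.2 (fun x hx => not_not_intro (hBq x hx)),
        Finset.empty_union]
    exact Prod.ext h1 h2
  · intro A hA
    exact (Finset.prod_filter_mul_prod_filter_not A q f).symm

open Finset in
lemma sum_powersetCard_multiples (p s n j : ℕ) (hp : 0 < p) :
    ∑ B ∈ ((Finset.Icc 1 n).filter (fun k => p ∣ k)).powersetCard j,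
        ∏ k ∈ B, (1 / (k : ℚ) ^ s)
      = ((p : ℚ) ^ s)⁻¹ ^ j * Hsub s j (n / p) := by
  classical
  rw [Hsub, Finset.mul_sum]
  refine Finset.sum_nbij' (i := fun B => B.image (· / p)) (j := fun C => C.image (p * ·))
    ?_ ?_ ?_ ?_ ?_
  · intro B hB
    rw [Finset.mem_powersetCard] at hB
    obtain ⟨hBsub, hBcard⟩ := hB
    have hmem : ∀ k ∈ B, p ∣ k ∧ 1 ≤ k ∧ k ≤ n := by
      intro k hk
      have := Finset.mem_filter.1 (hBsub hk)
      exact ⟨this.2, (Finset.mem_Icc.1 this.1).1, (Finset.mem_Icc.1 this.1).2⟩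
    rw [Finset.mem_powersetCard]
    constructor
    · intro x hx
      rw [Finset.mem_image] at hx
      obtain ⟨k, hk, rfl⟩ := hx
      obtain ⟨hdvd, h1, h2⟩ := hmem k hk
      rw [Finset.mem_Icc]
      exact ⟨(Nat.one_le_div_iff hp).2 (Nat.le_of_dvd h1 hdvd), Nat.div_le_div_right h2⟩
    · rw [Finset.card_image_of_injOn, hBcard]
      intro a ha b hb hab
      have hab' : a / p = b / p := hab
      have ha' := (hmem a ha).1
      have hb' := (hmem b hb).1
      rw [← Nat.div_mul_cancel ha', ← Nat.div_mul_cancel hb', hab']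
  · intro C hC
    rw [Finset.mem_powersetCard] at hC
    obtain ⟨hCsub, hCcard⟩ := hC
    rw [Finset.mem_powersetCard]
    constructor
    · intro x hx
      rw [Finset.mem_image] at hx
      obtain ⟨c, hc, rfl⟩ := hx
      obtain ⟨h1, h2⟩ := Finset.mem_Icc.1 (hCsub hc)
      rw [Finset.mem_filter, Finset.mem_Icc]
      exact ⟨⟨Nat.one_le_iff_ne_zero.2 (Nat.mul_ne_zero hp.ne' (by omega)),
        by rw [mul_comm]; exact (Nat.le_div_iff_mul_le hp).1 h2⟩, Dvd.intro _ rfl⟩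
    · rw [Finset.card_image_of_injOn, hCcard]
      intro a _ b _ hab
      have hab' : p * a = p * b := hab
      exact Nat.eq_of_mul_eq_mul_left hp hab'
  · intro B hB
    rw [Finset.mem_powersetCard] at hB
    have hmem : ∀ k ∈ B, p ∣ k := fun k hk => (Finset.mem_filter.1 (hB.1 hk)).2
    show (B.image (· / p)).image (p * ·) = B
    rw [Finset.image_image]
    refine Finset.image_congr ?_ |>.trans (Finset.image_id)
    intro k hk
    exact Nat.mul_div_cancel' (hmem k hk)
  · intro C hC
    show (C.image (p * ·)).image (· / p) = C
    rw [Finset.image_image]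
    refine Finset.image_congr ?_ |>.trans (Finset.image_id)
    intro c _
    exact Nat.mul_div_cancel_left c hp
  · intro B hB
    rw [Finset.mem_powersetCard] at hB
    obtain ⟨hBsub, hBcard⟩ := hB
    have hmem : ∀ k ∈ B, p ∣ k ∧ 1 ≤ k := by
      intro k hk
      have := Finset.mem_filter.1 (hBsub hk)
      exact ⟨this.2, (Finset.mem_Icc.1 this.1).1⟩
    have hinj : ∀ a ∈ B, ∀ b ∈ B, a / p = b / p → a = b := by
      intro a ha b hb hab
      rw [← Nat.div_mul_cancel (hmem a ha).1, ← Nat.div_mul_cancel (hmem b hb).1, hab]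
    rw [Finset.prod_image hinj, ← hBcard, ← Finset.prod_const, ← Finset.prod_mul_distrib]
    refine Finset.prod_congr rfl fun k hk => ?_
    obtain ⟨hdvd, h1⟩ := hmem k hk
    have hk' : (k : ℚ) = (p : ℚ) * ((k / p : ℕ) : ℚ) := by
      rw [← Nat.cast_mul, Nat.mul_div_cancel' hdvd]
    rw [hk', mul_pow, one_div, mul_inv]
    ring

open Finset in
lemma Hsub_split (p s l n : ℕ) (hp : 0 < p) :
    Hsub s l n = ∑ j ∈ Finset.range (l + 1),
      ((p : ℚ) ^ s)⁻¹ ^ j * Hsub s j (n / p) * Hstar p s (l - j) n := by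
  classical
  rw [Hsub, ← Finset.sum_fiberwise_of_maps_to
    (g := fun A => #(A.filter (fun k => p ∣ k))) (t := Finset.range (l + 1))
    (fun A hA => by
      rw [Finset.mem_powersetCard] at hA
      rw [Finset.mem_range]
      exact Nat.lt_succ_of_le (hA.2 ▸ Finset.card_filter_le _ _))]
  refine Finset.sum_congr rfl fun j hj => ?_
  rw [Finset.mem_range] at hj
  rw [sum_powersetCard_filter_eq _ _ l j (by omega),
    sum_powersetCard_multiples p s n j hp, Hstar]

lemma Hstar_zero (p s n : ℕ) : Hstar p s 0 n = 1 := by simp [Hstar]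

lemma step_lemma (p s l : ℕ) [hp : Fact p.Prime] (hs : 0 < s) (hl : 2 ≤ l)
    (t : ℕ) (ht : 1 ≤ t)
    (IH : ∀ m, p ^ (t - 1) ≤ m → m < p ^ t →
      Hsub s l m ≠ 0 ∧ ((l : ℤ) - 1) * s * t - s < -(padicValRat p (Hsub s l m)))
    (n : ℕ) (hn1 : p ^ t ≤ n) (hn2 : n < p ^ (t + 1)) :
    Hsub s l n ≠ 0 ∧
      ((l : ℤ) - 1) * s * ((t : ℤ) + 1) - s < -(padicValRat p (Hsub s l n)) := by
  have hp1 : 1 < p := hp.out.one_lt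
  have hp0 : 0 < p := hp.out.pos
  set m := n / p with hmdef
  have hm2 : m < p ^ t := by
    rw [hmdef, Nat.div_lt_iff_lt_mul hp0]
    calc n < p ^ (t + 1) := hn2
    _ = p ^ t * p := pow_succ p t
  have hm1 : p ^ (t - 1) ≤ m := by
    rw [hmdef, Nat.le_div_iff_mul_le hp0]
    calc p ^ (t - 1) * p = p ^ (t - 1 + 1) := (pow_succ p (t - 1)).symm
    _ = p ^ t := by congr 1; omega
    _ ≤ n := hn1
  obtain ⟨hm0, hmval⟩ := IH m hm1 hm2
  have hsplit := Hsub_split p s l n hp0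
  rw [Finset.sum_range_succ, Nat.sub_self, Hstar_zero, mul_one, add_comm] at hsplit
  set a := ((p : ℚ) ^ s)⁻¹ ^ l * Hsub s l m with hadef
  set rest := ∑ j ∈ Finset.range l,
    ((p : ℚ) ^ s)⁻¹ ^ j * Hsub s j m * Hstar p s (l - j) n with hrdef
  have hpinv : ((p : ℚ) ^ s)⁻¹ ≠ 0 := by
    have : (p : ℚ) ≠ 0 := Nat.cast_ne_zero.2 hp0.ne'
    positivity
  have hvinv : padicValRat p ((p : ℚ) ^ s)⁻¹ = -(s : ℤ) := padicValRat.self_pow_inv s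
  have hane : a ≠ 0 := mul_ne_zero (pow_ne_zero l hpinv) hm0
  have hva : padicValRat p a = -((l : ℤ) * s) + padicValRat p (Hsub s l m) := by
    rw [hadef, padicValRat.mul (pow_ne_zero l hpinv) hm0,
      padicValRat.pow (q := ((p : ℚ) ^ s)⁻¹), hvinv]
    ring
  set vH := padicValRat p (Hsub s l m) with hvHdef
  -- bound on the rest
  have hrest : rest = 0 ∨ -(((l : ℤ) - 1) * s * ((t : ℤ) + 1)) ≤ padicValRat p rest := by
    refine val_sum_ge _ _ _ fun j hj hjne => ?_
    rw [Finset.mem_range] at hj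
    have hXne : Hsub s j m ≠ 0 := by
      intro h0
      apply hjne
      rw [h0, mul_zero, zero_mul]
    have hYne : Hstar p s (l - j) n ≠ 0 := by
      intro h0
      apply hjne
      rw [h0, mul_zero]
    have hvX : -((j : ℤ) * s * t) ≤ padicValRat p (Hsub s j m) :=
      ((val_Hsub_ge s j m t hm2).resolve_left hXne)
    have hvY : 0 ≤ padicValRat p (Hstar p s (l - j) n) :=
      ((val_Hstar_nonneg s (l - j) n).resolve_left hYne)
    rw [padicValRat.mul (mul_ne_zero (pow_ne_zero j hpinv) hXne) hYne,
      padicValRat.mul (pow_ne_zero j hpinv) hXne, padicValRat.pow (q := ((p : ℚ) ^ s)⁻¹), hvinv]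
    have hjl : (j : ℤ) ≤ (l : ℤ) - 1 := by
      have : (j : ℤ) < l := Int.ofNat_lt.2 hj
      omega
    have hs0 : (0 : ℤ) ≤ s := Int.natCast_nonneg s
    have ht0 : (0 : ℤ) ≤ t := Int.natCast_nonneg t
    have key : (j : ℤ) * s * ((t : ℤ) + 1) ≤ ((l : ℤ) - 1) * s * ((t : ℤ) + 1) := by
      have h1 : (0 : ℤ) ≤ (t : ℤ) + 1 := by linarith
      have h2 : (0 : ℤ) ≤ ((l : ℤ) - 1 - j) * s := mul_nonneg (by linarith) hs0
      nlinarith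
    have e3 : (j : ℤ) * s * ((t : ℤ) + 1) = (j : ℤ) * s * t + (j : ℤ) * s := by ring
    linarith
  -- dominance
  have hdom : padicValRat p a < -(((l : ℤ) - 1) * s * ((t : ℤ) + 1)) := by
    have e1 : ((l : ℤ) - 1) * s * ((t : ℤ) + 1)
        = ((l : ℤ) - 1) * s * t + ((l : ℤ) - 1) * s := by ring
    have e2 : ((l : ℤ) - 1) * s = (l : ℤ) * s - s := by ring
    have := hmval
    rw [hva]
    linarith
  obtain ⟨hne0, hveq⟩ := val_add_dominant (p := p) hane
    (fun hrne => lt_of_lt_of_le hdom ((hrest.resolve_left hrne)))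
  rw [← hsplit] at hne0 hveq
  refine ⟨hne0, ?_⟩
  rw [hveq, hva]
  have e1 : ((l : ℤ) - 1) * s * ((t : ℤ) + 1)
      = ((l : ℤ) - 1) * s * t + ((l : ℤ) - 1) * s := by ring
  have e2 : ((l : ℤ) - 1) * s = (l : ℤ) * s - s := by ring
  have hs1 : (1 : ℤ) ≤ s := by exact_mod_cast hs
  linarith


theorem stmt2 (s l p : ℕ) (hs : 0 < s) (hl : 2 ≤ l) (hp : p.Prime)
    (t₀ : ℕ) (ht₀ : 1 ≤ t₀) (ht₀l : p ^ (t₀ - 1) ≤ l) (hlt₀ : l < p ^ t₀)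
    (hcrit : ∃ τ : ℕ, t₀ < τ ∧
      ∀ n : ℕ, p ^ (τ - 1) ≤ n → n < p ^ τ →
        mhs (List.replicate l s) n ≠ 0 ∧
          ((l : ℤ) - 1) * s * τ - s < -(padicValRat p (mhs (List.replicate l s) n))) :
    {n : ℕ | (p : ℤ) ∣ (mhs (List.replicate l s) n).num}.Finite := by
  haveI : Fact p.Prime := ⟨hp⟩
  obtain ⟨τ, hτ, hbase⟩ := hcrit
  have hτ1 : 1 ≤ τ := by omega
  have hbase' : ∀ n, p ^ (τ - 1) ≤ n → n < p ^ τ →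
      Hsub s l n ≠ 0 ∧ ((l : ℤ) - 1) * s * τ - s < -(padicValRat p (Hsub s l n)) := by
    intro n h1 h2
    have := hbase n h1 h2
    rwa [mhs_replicate_eq] at this
  have hall : ∀ t, τ ≤ t → ∀ n, p ^ (t - 1) ≤ n → n < p ^ t →
      Hsub s l n ≠ 0 ∧ ((l : ℤ) - 1) * s * t - s < -(padicValRat p (Hsub s l n)) := by
    intro t ht
    induction t, ht using Nat.le_induction with
    | base => exact hbase'
    | succ t ht IH =>
      intro n h1 h2
      have ht1 : 1 ≤ t := by omega
      have h1' : p ^ t ≤ n := by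
        have he : t + 1 - 1 = t := by omega
        rwa [he] at h1
      have hst := step_lemma p s l hs hl t ht1 IH n h1' h2
      refine ⟨hst.1, ?_⟩
      have := hst.2
      have hcast : ((t + 1 : ℕ) : ℤ) = (t : ℤ) + 1 := by push_cast; ring
      rw [hcast]
      exact this
  refine Set.Finite.subset (Set.finite_lt_nat (p ^ (τ - 1))) ?_
  intro n hn
  rw [Set.mem_setOf_eq] at hn
  by_contra hge
  simp only [Set.mem_setOf_eq, not_lt] at hge
  obtain ⟨t, htτ, htn1, htn2⟩ : ∃ t, τ ≤ t ∧ p ^ (t - 1) ≤ n ∧ n < p ^ t := by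
    by_cases hcase : n < p ^ τ
    · exact ⟨τ, le_refl τ, hge, hcase⟩
    · push_neg at hcase
      have hn0 : n ≠ 0 := by
        have : 0 < p ^ τ := pow_pos hp.pos τ
        omega
      refine ⟨Nat.log p n + 1, ?_, ?_, ?_⟩
      · have := Nat.le_log_of_pow_le hp.one_lt hcase
        omega
      · have he : Nat.log p n + 1 - 1 = Nat.log p n := by omega
        rw [he]
        exact Nat.pow_log_le_self p hn0
      · exact Nat.lt_pow_succ_log_self hp.one_lt n
  obtain ⟨hne, hval⟩ := hall t htτ n htn1 htn2
  rw [mhs_replicate_eq] at hn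
  have h1le : 1 ≤ padicValRat p (Hsub s l n) := one_le_val_of_dvd_num hne hn
  have hl1 : (1 : ℤ) ≤ (l : ℤ) - 1 := by
    have : (2 : ℤ) ≤ l := by exact_mod_cast hl
    omega
  have hs1 : (1 : ℤ) ≤ (s : ℤ) := by exact_mod_cast hs
  have ht1 : (1 : ℤ) ≤ (t : ℤ) := by
    have : 1 ≤ t := by omega
    exact_mod_cast this
  have hst : (s : ℤ) ≤ (s : ℤ) * t := le_mul_of_one_le_right (by linarith) ht1
  have hlst : (s : ℤ) * t ≤ ((l : ℤ) - 1) * s * t := by nlinarith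
  linarith
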